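/- Let M_t ≥ 1, M_r ≥ 1 be integers with min(M_t, M_r) = 1, let M^* = max(M_t, M_r), and let b > 0 be real. With d*(r) = M^*(1 − r) for r ∈ [0, 1] (the DMT curve of the MISO/SIMO channel), define for each n ≥ 1: Δ_n = sup over all t ∈ ℝ^n with t_i ≥ 0 and Σ_{i=1}^n t_i = 1 and all r ∈ ℝ^n with 0 ≤ r_1 ≤ ⋯ ≤ r_n ≤ 1, of min_{0 ≤ k ≤ n} { d*(r_{k+1}) + b·Σ_{i=1}^k t_i r_i } (where d*(r_{n+1}) is interpreted as 0). Then lim_{n→∞} Δ_n = M^*·(1 − e^{−b/M^*}). -/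

import Mathlib

open Filter

/-- For a MISO/SIMO channel (`min(M_t, M_r) = 1`) with DMT curve
`d*(r) = M^*(1 - r)` on `[0, 1]`, the `n`-layer LS distortion exponent `Δ n`
converges, as `n → ∞`, to `M^*(1 - e^{-b/M^*})` where `M^* = max(M_t, M_r)`. -/
theorem stmt_5 (Mt Mr : ℕ) (hMt : 1 ≤ Mt) (hMr : 1 ≤ Mr) (hmin : min Mt Mr = 1)
    (b : ℝ) (hb : 0 < b) (Δ : ℕ → ℝ)
    (hΔ : ∀ n, Δ n = sSup { v : ℝ | ∃ t r : ℕ → ℝ,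
        (∀ i, 0 ≤ t i) ∧ (∑ i ∈ Finset.range n, t i) = 1 ∧
        (0 ≤ r 0) ∧ (∀ i j, i ≤ j → j < n → r i ≤ r j) ∧
        (∀ i < n, r i ≤ 1) ∧
        v = (Finset.range (n + 1)).inf' Finset.nonempty_range_add_one (fun k =>
          if k = n then b * ∑ i ∈ Finset.range n, t i * r i
          else (max Mt Mr : ℝ) * (1 - r k) + b * ∑ i ∈ Finset.range k, t i * r i) }) :
    Tendsto Δ atTop
      (nhds ((max Mt Mr : ℝ) * (1 - Real.exp (-b / (max Mt Mr : ℝ))))) := by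
  have hM1 : (1:ℝ) ≤ (max Mt Mr : ℝ) := by exact_mod_cast le_max_of_le_left hMt
  set M : ℝ := (max Mt Mr : ℝ) with hMdef
  have hM0 : (0:ℝ) < M := lt_of_lt_of_le one_pos hM1
  have hc0 : (0:ℝ) < b / M := div_pos hb hM0
  set c : ℝ := b / M with hcdef
  have hbc : b = c * M := by rw [hcdef]; exact (div_mul_cancel₀ b hM0.ne').symm
  -- Upper bound: every feasible value is at most M * (1 - exp (-c)).
  have hupper : ∀ n : ℕ, ∀ v : ℝ, ∀ t r : ℕ → ℝ,
      (∀ i, 0 ≤ t i) → (∑ i ∈ Finset.range n, t i) = 1 →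
      (0 ≤ r 0) → (∀ i j, i ≤ j → j < n → r i ≤ r j) →
      (∀ i < n, r i ≤ 1) →
      v = (Finset.range (n + 1)).inf' Finset.nonempty_range_add_one (fun k =>
          if k = n then b * ∑ i ∈ Finset.range n, t i * r i
          else M * (1 - r k) + b * ∑ i ∈ Finset.range k, t i * r i) →
      v ≤ M * (1 - Real.exp (-c)) := by
    intro n v t r ht hts hr0 _hrmono _hr1 hv
    have hn : 0 < n := by
      rcases Nat.eq_zero_or_pos n with h | h
      · exfalso; rw [h] at hts; simp at hts
      · exact h
    have hle : ∀ k ∈ Finset.range (n+1), v ≤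
        (if k = n then b * ∑ i ∈ Finset.range n, t i * r i
          else M * (1 - r k) + b * ∑ i ∈ Finset.range k, t i * r i) := by
      intro k hk
      rw [hv]
      exact Finset.inf'_le _ hk
    have hkey : ∀ k < n, v ≤ M * (1 - r k) + b * ∑ i ∈ Finset.range k, t i * r i := by
      intro k hk
      have h := hle k (Finset.mem_range.2 (hk.trans (Nat.lt_succ_self n)))
      simpa [Nat.ne_of_lt hk] using h
    have hlast : v ≤ b * ∑ i ∈ Finset.range n, t i * r i := by
      have h := hle n (Finset.self_mem_range_succ n)
      simpa using h
    have hP : ∀ k, k ≤ n → M - v + b * ∑ i ∈ Finset.range k, t i * r i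
        ≤ (M - v) * ∏ i ∈ Finset.range k, (1 + c * t i) := by
      intro k
      induction k with
      | zero => intro _; simp
      | succ m ih =>
        intro hk
        have hm : m < n := hk
        have ih' := ih hm.le
        have hr : M * r m ≤ M - v + b * ∑ i ∈ Finset.range m, t i * r i := by
          have := hkey m hm
          nlinarith
        rw [Finset.sum_range_succ, Finset.prod_range_succ]
        have htm := ht m
        have hctm : 0 ≤ c * t m := mul_nonneg hc0.le htm
        rw [hbc] at ih' hr ⊢
        have h1 := mul_le_mul_of_nonneg_left hr hctm
        have h2 := mul_le_mul_of_nonneg_left ih' hctm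
        linarith
    have hMv : 0 ≤ M - v := by
      have h0 := hkey 0 hn
      simp only [Finset.range_zero, Finset.sum_empty, mul_zero, add_zero] at h0
      nlinarith
    have hprod : ∏ i ∈ Finset.range n, (1 + c * t i) ≤ Real.exp c := by
      calc ∏ i ∈ Finset.range n, (1 + c * t i)
          ≤ ∏ i ∈ Finset.range n, Real.exp (c * t i) := by
            apply Finset.prod_le_prod
            · intro i _
              have := mul_nonneg hc0.le (ht i)
              linarith
            · intro i _
              linarith [Real.add_one_le_exp (c * t i)]
        _ = Real.exp (∑ i ∈ Finset.range n, c * t i) := (Real.exp_sum _ _).symm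
        _ = Real.exp c := by rw [← Finset.mul_sum, hts, mul_one]
    have hfinal : M ≤ (M - v) * Real.exp c := by
      have h1 := hP n le_rfl
      have h2 : (M - v) * (∏ i ∈ Finset.range n, (1 + c * t i)) ≤ (M - v) * Real.exp c :=
        mul_le_mul_of_nonneg_left hprod hMv
      linarith
    have hh : Real.exp (-c) * Real.exp c = 1 := by
      rw [← Real.exp_add]; simp
    nlinarith [mul_le_mul_of_nonneg_right hfinal (Real.exp_pos (-c)).le]
  -- Lower bound witness for each n ≥ 1.
  have hlow : ∀ n : ℕ, 0 < n → (M * (1 - ((1 + c / n) ^ n)⁻¹)) ∈ { v : ℝ | ∃ t r : ℕ → ℝ,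
        (∀ i, 0 ≤ t i) ∧ (∑ i ∈ Finset.range n, t i) = 1 ∧
        (0 ≤ r 0) ∧ (∀ i j, i ≤ j → j < n → r i ≤ r j) ∧
        (∀ i < n, r i ≤ 1) ∧
        v = (Finset.range (n + 1)).inf' Finset.nonempty_range_add_one (fun k =>
          if k = n then b * ∑ i ∈ Finset.range n, t i * r i
          else M * (1 - r k) + b * ∑ i ∈ Finset.range k, t i * r i) } := by
    intro n hn
    have hn' : (0:ℝ) < n := by exact_mod_cast hn
    set q : ℝ := 1 + c / n with hqdef
    have hq1 : 1 < q := by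
      have h : 0 < c / n := div_pos hc0 hn'
      rw [hqdef]; linarith
    have hq0 : 0 < q := by linarith
    have hqn0 : (0:ℝ) < q ^ n := pow_pos hq0 n
    have hqne : q ≠ 1 := ne_of_gt hq1
    refine ⟨fun _ => (n:ℝ)⁻¹, fun i => q ^ i / q ^ n, ?_, ?_, ?_, ?_, ?_, ?_⟩
    · intro i; positivity
    · rw [Finset.sum_const, Finset.card_range, nsmul_eq_mul]
      field_simp
    · positivity
    · intro i j hij _
      exact div_le_div_of_nonneg_right (pow_le_pow_right₀ hq1.le hij) hqn0.le
    · intro i hi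
      rw [div_le_one hqn0]
      exact pow_le_pow_right₀ hq1.le hi.le
    · -- all inf' terms equal M * (1 - (q^n)⁻¹)
      have hsum : ∀ k : ℕ, b * ∑ i ∈ Finset.range k, (n:ℝ)⁻¹ * (q ^ i / q ^ n)
          = M * (q ^ k - 1) / q ^ n := by
        intro k
        have h1 : ∑ i ∈ Finset.range k, (n:ℝ)⁻¹ * (q ^ i / q ^ n)
            = (n:ℝ)⁻¹ * (q ^ n)⁻¹ * ∑ i ∈ Finset.range k, q ^ i := by
          rw [Finset.mul_sum]
          refine Finset.sum_congr rfl fun i _ => ?_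
          field_simp
        rw [h1, geom_sum_eq hqne]
        have hq1' : q - 1 = c / n := by rw [hqdef]; ring
        rw [hq1', hbc]
        field_simp
      have hFval : ∀ k ∈ Finset.range (n+1),
          (if k = n then b * ∑ i ∈ Finset.range n, (n:ℝ)⁻¹ * (q ^ i / q ^ n)
            else M * (1 - q ^ k / q ^ n) + b * ∑ i ∈ Finset.range k, (n:ℝ)⁻¹ * (q ^ i / q ^ n))
          = M * (1 - (q ^ n)⁻¹) := by
        intro k _
        by_cases hkn : k = n
        · rw [if_pos hkn, hsum]
          field_simp
        · rw [if_neg hkn, hsum]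
          field_simp
          ring
      refine le_antisymm ?_ ?_
      · apply Finset.le_inf'
        intro k hk
        exact (hFval k hk).ge
      · have := Finset.inf'_le (b := n)
          (fun k => if k = n then b * ∑ i ∈ Finset.range n, (n:ℝ)⁻¹ * (q ^ i / q ^ n)
            else M * (1 - q ^ k / q ^ n) + b * ∑ i ∈ Finset.range k, (n:ℝ)⁻¹ * (q ^ i / q ^ n))
          (Finset.self_mem_range_succ n)
        calc _ ≤ _ := this
          _ = M * (1 - (q ^ n)⁻¹) := hFval n (Finset.self_mem_range_succ n)
  -- Limit of the lower bound sequence.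
  have hWlim : Tendsto (fun n : ℕ => M * (1 - ((1 + c / n) ^ n)⁻¹)) atTop
      (nhds (M * (1 - Real.exp (-c)))) := by
    have h1 : Tendsto (fun n : ℕ => ((1 + c / n) ^ n : ℝ)) atTop (nhds (Real.exp c)) :=
      Real.tendsto_one_add_div_pow_exp c
    have h2 := h1.inv₀ (Real.exp_ne_zero c)
    rw [← Real.exp_neg] at h2
    exact (tendsto_const_nhds.sub h2).const_mul M
  have hgoal : -b / M = -c := by rw [hcdef, neg_div]
  rw [hgoal]
  refine tendsto_of_tendsto_of_tendsto_of_le_of_le' hWlim tendsto_const_nhds ?_ ?_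
  · filter_upwards [eventually_gt_atTop 0] with n hn
    rw [hΔ n]
    refine le_csSup ⟨M * (1 - Real.exp (-c)), ?_⟩ (hlow n hn)
    rintro v ⟨t, r, h1, h2, h3, h4, h5, h6⟩
    exact hupper n v t r h1 h2 h3 h4 h5 h6
  · filter_upwards [eventually_gt_atTop 0] with n hn
    rw [hΔ n]
    refine csSup_le ⟨_, hlow n hn⟩ ?_
    rintro v ⟨t, r, h1, h2, h3, h4, h5, h6⟩
    exact hupper n v t r h1 h2 h3 h4 h5 h6
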